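/- An Archimedean vector lattice X is finite-dimensional if and only if every uo-null net in X is eventually order bounded in X. -/

import Mathlib

set_option linter.unusedSectionVars false
set_option maxHeartbeats 1000000

/-- A net `x : ι → X` (indexed by a preordered set `ι`) *order converges* (`o`-converges)
to `l ∈ X` if there is a net `y : Γ → X` over a nonempty directed set `Γ` which decreases
to `0` (i.e. `y` is antitone and `inf_γ y γ = 0`) such that for every `γ` there is an index
`α₀` with `|x α - l| ≤ y γ` for all `α ≥ α₀`. -/
def OConvergesTo {X : Type u} [Lattice X] [AddCommGroup X]
    {ι : Type v} [Preorder ι] (x : ι → X) (l : X) : Prop :=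
  ∃ (Γ : Type u) (_ : Preorder Γ) (_ : Nonempty Γ),
    IsDirected Γ (· ≤ ·) ∧
    ∃ y : Γ → X, Antitone y ∧ IsGLB (Set.range y) 0 ∧
      ∀ γ : Γ, ∃ α₀ : ι, ∀ α : ι, α₀ ≤ α → |x α - l| ≤ y γ

/-- A net `x : ι → X` is *unbounded order convergent* (`uo`-convergent) to `l ∈ X` if
`|x α - l| ⊓ y` order converges to `0` for every `y ≥ 0`. -/
def UOConvergesTo {X : Type u} [Lattice X] [AddCommGroup X]
    {ι : Type v} [Preorder ι] (x : ι → X) (l : X) : Prop :=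
  ∀ y : X, 0 ≤ y → OConvergesTo (fun α => |x α - l| ⊓ y) (0 : X)

/-- A net `x : ι → X` is *eventually order bounded* if there are `α₀ ∈ ι` and `b ∈ X`
with `|x α| ≤ b` for all `α ≥ α₀`. -/
def EventuallyOrderBounded {X : Type u} [Lattice X] [AddCommGroup X]
    {ι : Type v} [Preorder ι] (x : ι → X) : Prop :=
  ∃ (α₀ : ι) (b : X), ∀ α : ι, α₀ ≤ α → |x α| ≤ b

/-- A vector lattice is *Archimedean* if `n • x ≤ y` for all `n : ℕ` implies `x ≤ 0`. -/
def ArchimedeanVL (X : Type u) [Lattice X] [AddCommGroup X] : Prop :=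
  ∀ x y : X, (∀ n : ℕ, n • x ≤ y) → x ≤ 0



universe u v

section Helpers

variable {X : Type u} [AddCommGroup X] [Lattice X] [CovariantClass X X (· + ·) (· ≤ ·)]

lemma my_inf_add (a b c : X) : (a ⊓ b) + c = (a + c) ⊓ (b + c) :=
  map_inf (OrderIso.addRight c) a b

lemma my_inf_sub (a b c : X) : (a ⊓ b) - c = (a - c) ⊓ (b - c) := by
  simpa [sub_eq_add_neg] using my_inf_add a b (-c)

lemma my_inf_add_le {a b c : X} (ha : 0 ≤ a) (hb : 0 ≤ b) (hc : 0 ≤ c) :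
    a ⊓ (b + c) ≤ a ⊓ b + a ⊓ c := by
  have h1 : a ⊓ (b + c) - c ≤ a ⊓ b := by
    refine le_inf ?_ ?_
    · exact le_trans (sub_le_self _ hc) inf_le_left
    · exact sub_le_iff_le_add.mpr inf_le_right
  have h1' : a ⊓ (b + c) ≤ a ⊓ b + c := sub_le_iff_le_add.mp h1
  have h2 : a ⊓ (b + c) - a ⊓ b ≤ a ⊓ c := by
    refine le_inf ?_ ?_
    · exact le_trans (sub_le_self _ (le_inf ha hb)) inf_le_left
    · rw [sub_le_iff_le_add, add_comm c (a ⊓ b)]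
      exact h1'
  have h3 := sub_le_iff_le_add.mp h2
  rw [add_comm (a ⊓ c) (a ⊓ b)] at h3
  exact h3

lemma my_disj_add {a b c : X} (hab : a ⊓ b = 0) (hac : a ⊓ c = 0)
    (ha : 0 ≤ a) (hb : 0 ≤ b) (hc : 0 ≤ c) : a ⊓ (b + c) = 0 := by
  refine le_antisymm ?_ (le_inf ha (add_nonneg hb hc))
  calc a ⊓ (b + c) ≤ a ⊓ b + a ⊓ c := my_inf_add_le ha hb hc
    _ = 0 := by rw [hab, hac, add_zero]

lemma my_disj_nsmul {a b : X} (hab : a ⊓ b = 0) (ha : 0 ≤ a) (hb : 0 ≤ b) (n : ℕ) :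
    a ⊓ (n • b) = 0 := by
  induction n with
  | zero => simpa using inf_eq_right.mpr ha
  | succ n ih =>
      rw [succ_nsmul]
      exact my_disj_add ih hab ha (nsmul_nonneg hb n) hb

lemma my_sum_nonneg {ι : Type*} {s : Finset ι} {d : ι → X}
    (hd : ∀ i ∈ s, 0 ≤ d i) : 0 ≤ ∑ i ∈ s, d i := by
  classical
  induction s using Finset.induction with
  | empty => simp
  | insert j s' hnotmem ih =>
      rw [Finset.sum_insert hnotmem]
      exact add_nonneg (hd j (Finset.mem_insert_self _ _))
        (ih (fun i hi => hd i (Finset.mem_insert_of_mem hi)))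

lemma my_sum_disj {ι : Type*} {s : Finset ι} {d : ι → X} {a : X}
    (ha : 0 ≤ a) (hd : ∀ i ∈ s, 0 ≤ d i) (hdisj : ∀ i ∈ s, a ⊓ d i = 0) :
    a ⊓ (∑ i ∈ s, d i) = 0 := by
  classical
  induction s using Finset.induction with
  | empty => simpa using inf_eq_right.mpr ha
  | insert j s' hnotmem ih =>
      rw [Finset.sum_insert hnotmem]
      have hs : 0 ≤ ∑ i ∈ s', d i :=
        my_sum_nonneg (fun i hi => hd i (Finset.mem_insert_of_mem hi))
      have hih : a ⊓ (∑ i ∈ s', d i) = 0 :=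
        ih (fun i hi => hd i (Finset.mem_insert_of_mem hi))
           (fun i hi => hdisj i (Finset.mem_insert_of_mem hi))
      exact my_disj_add (hdisj j (Finset.mem_insert_self j s')) hih
        ha (hd j (Finset.mem_insert_self j s')) hs

lemma my_add_of_disj {a b : X} (h : a ⊓ b = 0) : a + b = a ⊔ b := by
  have := inf_add_sup a b
  rw [h, zero_add] at this
  exact this.symm

lemma my_sum_le_of_disj {ι : Type*} {s : Finset ι} {d : ι → X} {y : X}
    (hd0 : ∀ i ∈ s, 0 ≤ d i) (hdy : ∀ i ∈ s, d i ≤ y)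
    (hdisj : ∀ i ∈ s, ∀ j ∈ s, i ≠ j → d i ⊓ d j = 0) (hy : 0 ≤ y) :
    (∑ i ∈ s, d i) ≤ y := by
  classical
  induction s using Finset.induction with
  | empty => simpa using hy
  | insert j s' hnotmem ih =>
      rw [Finset.sum_insert hnotmem]
      have hsum : d j ⊓ (∑ i ∈ s', d i) = 0 :=
        my_sum_disj (hd0 j (Finset.mem_insert_self _ _))
          (fun i hi => hd0 i (Finset.mem_insert_of_mem hi))
          (fun i hi => hdisj j (Finset.mem_insert_self _ _) i
            (Finset.mem_insert_of_mem hi) (fun e => hnotmem (e ▸ hi)))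
      rw [my_add_of_disj hsum]
      exact sup_le (hdy j (Finset.mem_insert_self _ _))
        (ih (fun i hi => hd0 i (Finset.mem_insert_of_mem hi))
            (fun i hi => hdy i (Finset.mem_insert_of_mem hi))
            (fun i hi k hk => hdisj i (Finset.mem_insert_of_mem hi) k (Finset.mem_insert_of_mem hk)))

end Helpers
section Helpers2

variable {X : Type u} [AddCommGroup X] [Lattice X] [CovariantClass X X (· + ·) (· ≤ ·)]
  [Module ℝ X] [PosSMulMono ℝ X]

lemma my_smul_le_smul {s t : ℝ} {x : X} (hst : s ≤ t) (hx : 0 ≤ x) : s • x ≤ t • x := by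
  have h0 : 0 ≤ (t - s) • x := smul_nonneg (by linarith) hx
  rw [sub_smul] at h0
  exact sub_nonneg.mp h0

lemma my_le_of_smul_le {t : ℝ} (ht : 0 < t) {x y : X} (h : t • x ≤ t • y) : x ≤ y := by
  have := smul_le_smul_of_nonneg_left h (le_of_lt (inv_pos.mpr ht))
  rwa [inv_smul_smul₀ (ne_of_gt ht), inv_smul_smul₀ (ne_of_gt ht)] at this

lemma my_nonpos_of_smul {t : ℝ} (ht : 0 < t) {x : X} (h : t • x ≤ 0) : x ≤ 0 := by
  have := my_le_of_smul_le ht (x := x) (y := 0) (by simpa using h)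
  exact this

lemma my_disj_smul {a b : X} (hab : a ⊓ b = 0) (ha : 0 ≤ a) (hb : 0 ≤ b) {t : ℝ} (ht : 0 ≤ t) :
    a ⊓ (t • b) = 0 := by
  refine le_antisymm ?_ (le_inf ha (smul_nonneg ht hb))
  have h1 : t • b ≤ (⌈t⌉₊ : ℝ) • b := my_smul_le_smul (Nat.le_ceil t) hb
  rw [Nat.cast_smul_eq_nsmul] at h1
  calc a ⊓ (t • b) ≤ a ⊓ (⌈t⌉₊ • b) := inf_le_inf_left a h1
    _ = 0 := my_disj_nsmul hab ha hb _

lemma my_abs_of_nonneg {a : X} (h : 0 ≤ a) : |a| = a := abs_of_nonneg h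

lemma my_arch_of_eps (hArch : ArchimedeanVL X) {d e : X} (he : 0 ≤ e)
    (h : ∀ ε : ℝ, 0 < ε → d ≤ ε • e) : d ≤ 0 := by
  refine hArch d e (fun n => ?_)
  cases n with
  | zero => simpa using he
  | succ m =>
      set n := m + 1
      have hn : (0:ℝ) < n := by positivity
      have h1 : d ≤ (1 / (n:ℝ)) • e := h _ (by positivity)
      have h2 : (n:ℝ) • d ≤ (n:ℝ) • ((1 / (n:ℝ)) • e) :=
        smul_le_smul_of_nonneg_left h1 (le_of_lt hn)
      rw [smul_smul, mul_one_div, div_self (ne_of_gt hn), one_smul] at h2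
      rwa [Nat.cast_smul_eq_nsmul] at h2

end Helpers2

lemma my_sum_le_sum {X : Type u} [AddCommGroup X] [Lattice X]
    [CovariantClass X X (· + ·) (· ≤ ·)] {ι : Type*} {s : Finset ι} {f g : ι → X}
    (h : ∀ i ∈ s, f i ≤ g i) : ∑ i ∈ s, f i ≤ ∑ i ∈ s, g i := by
  classical
  induction s using Finset.induction with
  | empty => simp
  | insert j s hj ih =>
      rw [Finset.sum_insert hj, Finset.sum_insert hj]
      exact add_le_add (h j (Finset.mem_insert_self _ _))
        (ih (fun i hi => h i (Finset.mem_insert_of_mem hi)))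

section Atoms

variable {X : Type u} [AddCommGroup X] [Lattice X] [CovariantClass X X (· + ·) (· ≤ ·)]
  [Module ℝ X] [PosSMulMono ℝ X]

/-- `a` is an atom: positive, nonzero, and every element of `[0,a]` is a multiple of `a`. -/
def IsLatAtom (a : X) : Prop :=
  0 ≤ a ∧ a ≠ 0 ∧ ∀ x : X, 0 ≤ x → x ≤ a → ∃ t : ℝ, 0 ≤ t ∧ x = t • a

/-- If `[0,e]` contains no nonzero disjoint pair, then `e` is an atom. -/
lemma atom_of_no_disjoint_pair (hArch : ArchimedeanVL X) {e : X} (he0 : 0 ≤ e) (hene : e ≠ 0)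
    (h : ∀ u v : X, 0 ≤ u → 0 ≤ v → u ≤ e → v ≤ e → u ⊓ v = 0 → u = 0 ∨ v = 0) :
    IsLatAtom e := by
  refine ⟨he0, hene, fun x hx0 hxe => ?_⟩
  have dich : ∀ μ : ℝ, 0 < μ → x ≤ μ • e ∨ μ • e ≤ x := by
    intro μ hμ
    have hμe : 0 ≤ μ • e := smul_nonneg hμ.le he0
    have key : ((x - μ • e) ⊔ 0) ⊓ ((μ • e - x) ⊔ 0) = 0 := by
      have hk := posPart_inf_negPart_eq_zero (x - μ • e)
      simpa [posPart_def, negPart_def, neg_sub] using hk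
    have hu'0 : (0:X) ≤ ((x - μ • e) ⊔ 0) ⊓ e := le_inf le_sup_right he0
    have hv'0 : (0:X) ≤ ((μ • e - x) ⊔ 0) ⊓ e := le_inf le_sup_right he0
    have h2 : (((x - μ • e) ⊔ 0) ⊓ e) ⊓ (((μ • e - x) ⊔ 0) ⊓ e) = 0 := by
      refine le_antisymm ?_ (le_inf hu'0 hv'0)
      calc (((x - μ • e) ⊔ 0) ⊓ e) ⊓ (((μ • e - x) ⊔ 0) ⊓ e)
          ≤ ((x - μ • e) ⊔ 0) ⊓ ((μ • e - x) ⊔ 0) := inf_le_inf inf_le_left inf_le_left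
        _ = 0 := key
    rcases h _ _ hu'0 hv'0 inf_le_right inf_le_right h2 with h3 | h3
    · left
      have hle : (x - μ • e) ⊔ 0 ≤ e := sup_le (le_trans (sub_le_self _ hμe) hxe) he0
      have h4 : (x - μ • e) ⊔ 0 = 0 := by rw [← inf_eq_left.mpr hle]; exact h3
      have h5 : x - μ • e ≤ 0 := le_sup_left.trans_eq h4
      exact sub_nonpos.mp h5
    · right
      have hw : (μ • e - x) ⊔ 0 ≤ μ • e := sup_le (sub_le_self _ hx0) hμe
      have hw0 : (0:X) ≤ (μ • e - x) ⊔ 0 := le_sup_right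
      have hwd : ((μ • e - x) ⊔ 0) ⊓ (μ • e) = 0 := my_disj_smul h3 hw0 he0 hμ.le
      have h4 : (μ • e - x) ⊔ 0 = 0 := by rw [← inf_eq_left.mpr hw]; exact hwd
      have h5 : μ • e - x ≤ 0 := le_sup_left.trans_eq h4
      exact sub_nonpos.mp h5
  set S : Set ℝ := {μ | 0 ≤ μ ∧ μ • e ≤ x} with hSdef
  have hS0 : (0:ℝ) ∈ S := ⟨le_rfl, by simpa using hx0⟩
  have hSb : BddAbove S := by
    refine ⟨1, fun μ hμ => ?_⟩
    by_contra hc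
    push_neg at hc
    have h1 : (μ - 1) • e ≤ 0 := by
      rw [sub_smul]
      have h0 : μ • e ≤ (1:ℝ) • e := hμ.2.trans (by rw [one_smul]; exact hxe)
      exact sub_nonpos.mpr h0
    have h2 : e ≤ 0 := my_nonpos_of_smul (by linarith) h1
    exact hene (le_antisymm h2 he0)
  set lam := sSup S with hlamdef
  have hlam0 : 0 ≤ lam := le_csSup hSb hS0
  have hxle : ∀ μ, lam < μ → x ≤ μ • e := by
    intro μ hμ
    have hμpos : 0 < μ := lt_of_le_of_lt hlam0 hμ
    rcases dich μ hμpos with h1 | h1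
    · exact h1
    · exact absurd (le_csSup hSb ⟨hμpos.le, h1⟩) (not_le.mpr hμ)
  have h1 : x - lam • e ≤ 0 := by
    refine my_arch_of_eps hArch he0 (fun ε hε => ?_)
    have h2 := hxle (lam + ε) (by linarith)
    calc x - lam • e ≤ (lam + ε) • e - lam • e := sub_le_sub_right h2 _
      _ = ε • e := by rw [add_smul]; abel
  have h2 : lam • e - x ≤ 0 := by
    refine my_arch_of_eps hArch he0 (fun ε hε => ?_)
    obtain ⟨μ, hμS, hμgt⟩ := exists_lt_of_lt_csSup ⟨0, hS0⟩ (show lam - ε < lam by linarith)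
    calc lam • e - x ≤ lam • e - μ • e := sub_le_sub_left hμS.2 _
      _ = (lam - μ) • e := by rw [sub_smul]
      _ ≤ ε • e := my_smul_le_smul (by linarith) he0
  exact ⟨lam, hlam0, (le_antisymm (sub_nonpos.mp h1) (sub_nonpos.mp h2)).symm ▸ rfl⟩

lemma exists_disjoint_pair_of_not_atom (hArch : ArchimedeanVL X) {e : X} (he : 0 ≤ e)
    (hene : e ≠ 0) (hna : ¬ IsLatAtom e) :
    ∃ u v : X, 0 ≤ u ∧ u ≠ 0 ∧ 0 ≤ v ∧ v ≠ 0 ∧ u ≤ e ∧ v ≤ e ∧ u ⊓ v = 0 := by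
  by_contra hc
  push_neg at hc
  apply hna
  apply atom_of_no_disjoint_pair hArch he hene
  intro u v hu hv hue hve huv
  by_contra h2
  push_neg at h2
  exact (hc u v hu h2.1 hv h2.2 hue hve) huv

lemma atom_split (hArch : ArchimedeanVL X) {a : X} (ha : IsLatAtom a) {x : X} (hx : 0 ≤ x) :
    ∃ lam : ℝ, 0 ≤ lam ∧ lam • a ≤ x ∧ (x - lam • a) ⊓ a = 0 := by
  obtain ⟨ha0, hane, hatom⟩ := ha
  set S : Set ℝ := {t | 0 ≤ t ∧ t • a ≤ x} with hSdef
  have hS0 : (0:ℝ) ∈ S := ⟨le_rfl, by simpa using hx⟩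
  have hSb : BddAbove S := by
    by_contra hb
    rw [not_bddAbove_iff] at hb
    have hall : ∀ n : ℕ, n • a ≤ x := by
      intro n
      obtain ⟨t, htS, hnt⟩ := hb n
      calc n • a = (n:ℝ) • a := (Nat.cast_smul_eq_nsmul ℝ n a).symm
        _ ≤ t • a := my_smul_le_smul hnt.le ha0
        _ ≤ x := htS.2
    exact hane (le_antisymm (hArch a x hall) ha0)
  set lam := sSup S with hlamdef
  have hlam0 : 0 ≤ lam := le_csSup hSb hS0
  have hle : lam • a ≤ x := by
    have h2 : lam • a - x ≤ 0 := by
      refine my_arch_of_eps hArch ha0 (fun ε hε => ?_)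
      obtain ⟨μ, hμS, hμgt⟩ := exists_lt_of_lt_csSup ⟨0, hS0⟩ (show lam - ε < lam by linarith)
      calc lam • a - x ≤ lam • a - μ • a := sub_le_sub_left hμS.2 _
        _ = (lam - μ) • a := by rw [sub_smul]
        _ ≤ ε • a := my_smul_le_smul (by linarith) ha0
    exact sub_nonpos.mp h2
  refine ⟨lam, hlam0, hle, ?_⟩
  have hw0 : (0:X) ≤ (x - lam • a) ⊓ a := le_inf (sub_nonneg.mpr hle) ha0
  obtain ⟨s, hs0, hws⟩ := hatom _ hw0 inf_le_right
  have hsa : s • a ≤ x - lam • a := hws ▸ inf_le_left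
  have hmem : (lam + s) ∈ S := by
    refine ⟨by linarith, ?_⟩
    rw [add_smul]
    calc lam • a + s • a ≤ lam • a + (x - lam • a) := add_le_add_right hsa _
      _ = x := by abel
  have hs_le : lam + s ≤ lam := le_csSup hSb hmem
  have hs_eq : s = 0 := le_antisymm (by linarith) hs0
  rw [hws, hs_eq, zero_smul]

end Atoms

section Structure

variable {X : Type u} [AddCommGroup X] [Lattice X] [CovariantClass X X (· + ·) (· ≤ ·)]
  [Module ℝ X] [PosSMulMono ℝ X]

/-- There is an infinite sequence of pairwise disjoint nonzero positive elements. -/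
def HasDisjSeq (X : Type u) [AddCommGroup X] [Lattice X] : Prop :=
  ∃ u : ℕ → X, (∀ n, 0 ≤ u n ∧ u n ≠ 0) ∧ ∀ m n, m ≠ n → u m ⊓ u n = 0

lemma exists_atom_le (hArch : ArchimedeanVL X) (hno : ¬ HasDisjSeq X) {e : X}
    (he : 0 ≤ e) (hene : e ≠ 0) : ∃ a : X, IsLatAtom a ∧ a ≤ e := by
  by_contra hc
  push_neg at hc
  have hsplit : ∀ v : {v : X // (0 ≤ v ∧ v ≠ 0) ∧ v ≤ e}, ∃ p : X × X,
      (0 ≤ p.1 ∧ p.1 ≠ 0) ∧ (0 ≤ p.2 ∧ p.2 ≠ 0) ∧ p.1 ≤ v.val ∧ p.2 ≤ v.val ∧ p.1 ⊓ p.2 = 0 := by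
    intro v
    have hna : ¬ IsLatAtom v.val := fun ha => hc v.val ha v.prop.2
    obtain ⟨p, q, hp0, hpne, hq0, hqne, hpe, hqe, hpq⟩ :=
      exists_disjoint_pair_of_not_atom hArch v.prop.1.1 v.prop.1.2 hna
    exact ⟨(p, q), ⟨hp0, hpne⟩, ⟨hq0, hqne⟩, hpe, hqe, hpq⟩
  choose f hf using hsplit
  let g : ℕ → {v : X // (0 ≤ v ∧ v ≠ 0) ∧ v ≤ e} := fun n =>
    Nat.rec ⟨e, ⟨he, hene⟩, le_refl e⟩
      (fun _ v => ⟨(f v).2, (hf v).2.1, (hf v).2.2.2.1.trans v.prop.2⟩) n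
  have hgsucc : ∀ n, g (n + 1) = ⟨(f (g n)).2, (hf (g n)).2.1,
      (hf (g n)).2.2.2.1.trans (g n).prop.2⟩ := fun n => rfl
  let u : ℕ → X := fun n => (f (g n)).1
  have hu_pos : ∀ n, 0 ≤ u n ∧ u n ≠ 0 := fun n => (hf (g n)).1
  have hu_le : ∀ n, u n ≤ (g n).val := fun n => (hf (g n)).2.2.1
  have hstep_disj : ∀ n, u n ⊓ (g (n + 1)).val = 0 := by
    intro n
    rw [hgsucc n]
    exact (hf (g n)).2.2.2.2
  have hchain : ∀ n, (g (n + 1)).val ≤ (g n).val := by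
    intro n
    rw [hgsucc n]
    exact (hf (g n)).2.2.2.1.trans (le_refl _) |>.trans (le_refl _) |>.trans_eq rfl
  have hmono : ∀ n m, n ≤ m → (g m).val ≤ (g n).val := by
    intro n m hnm
    induction m with
    | zero => simp_all
    | succ m ih =>
        rcases Nat.lt_or_ge n (m + 1) with h | h
        · exact (hchain m).trans (ih (Nat.lt_succ_iff.mp h))
        · have : n = m + 1 := le_antisymm hnm h
          subst this
          exact le_refl _
  have hd : ∀ n m, n < m → u n ⊓ u m = 0 := by
    intro n m hnm
    have h1 : u m ≤ (g (n + 1)).val := (hu_le m).trans (hmono (n + 1) m hnm)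
    refine le_antisymm ?_ (le_inf (hu_pos n).1 (hu_pos m).1)
    calc u n ⊓ u m ≤ u n ⊓ (g (n + 1)).val := inf_le_inf_left _ h1
      _ = 0 := hstep_disj n
  refine hno ⟨u, hu_pos, fun m n hmn => ?_⟩
  rcases Nat.lt_or_ge m n with h | h
  · exact hd m n h
  · have h2 : n < m := lt_of_le_of_ne h (Ne.symm hmn)
    rw [inf_comm]
    exact hd n m h2

lemma exists_max_atoms (hArch : ArchimedeanVL X) (hno : ¬ HasDisjSeq X) :
    ∃ (k : ℕ) (a : Fin k → X), (∀ i, IsLatAtom (a i)) ∧ (∀ i j, i ≠ j → a i ⊓ a j = 0) ∧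
      ∀ b : X, IsLatAtom b → ∃ i, b ⊓ a i ≠ 0 := by
  by_contra hc
  push_neg at hc
  have hext : ∀ (n : ℕ) (a : {a : Fin n → X //
      (∀ i, IsLatAtom (a i)) ∧ ∀ i j, i ≠ j → a i ⊓ a j = 0}),
      ∃ b : X, IsLatAtom b ∧ ∀ i, b ⊓ a.val i = 0 :=
    fun n a => hc n a.val a.prop.1 a.prop.2
  choose F hF using hext
  have hstep : ∀ (n : ℕ) (a : {a : Fin n → X //
      (∀ i, IsLatAtom (a i)) ∧ ∀ i j, i ≠ j → a i ⊓ a j = 0}),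
      (∀ i, IsLatAtom ((Fin.snoc a.val (F n a) : Fin (n+1) → X) i)) ∧
      ∀ i j, i ≠ j → (Fin.snoc a.val (F n a) : Fin (n+1) → X) i ⊓
        (Fin.snoc a.val (F n a) : Fin (n+1) → X) j = 0 := by
    intro n a
    constructor
    · intro i
      refine Fin.lastCases ?_ ?_ i
      · rw [Fin.snoc_last]; exact (hF n a).1
      · intro j; rw [Fin.snoc_castSucc]; exact a.prop.1 j
    · intro i j hij
      induction i using Fin.lastCases with
      | last =>
          induction j using Fin.lastCases with
          | last => exact absurd rfl hij
          | cast j' =>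
              rw [Fin.snoc_last, Fin.snoc_castSucc]
              exact (hF n a).2 j'
      | cast i' =>
          induction j using Fin.lastCases with
          | last =>
              rw [Fin.snoc_last, Fin.snoc_castSucc, inf_comm]
              exact (hF n a).2 i'
          | cast j' =>
              rw [Fin.snoc_castSucc, Fin.snoc_castSucc]
              refine a.prop.2 i' j' (fun h => hij ?_)
              rw [h]
  let g : ∀ n, {a : Fin n → X //
      (∀ i, IsLatAtom (a i)) ∧ ∀ i j, i ≠ j → a i ⊓ a j = 0} := fun n =>
    Nat.rec ⟨(fun i => i.elim0), fun i => i.elim0, fun i => i.elim0⟩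
      (fun n a => ⟨Fin.snoc a.val (F n a), hstep n a⟩) n
  have hgsucc : ∀ n, (g (n + 1)).val = Fin.snoc (g n).val (F n (g n)) := fun n => rfl
  let u : ℕ → X := fun n => F n (g n)
  have hu_atom : ∀ n, IsLatAtom (u n) := fun n => (hF n (g n)).1
  have hrep : ∀ m n (h : n < m), (g m).val ⟨n, h⟩ = u n := by
    intro m
    induction m with
    | zero => intro n h; exact absurd h (Nat.not_lt_zero n)
    | succ m ih =>
        intro n h
        rcases Nat.lt_or_ge n m with h2 | h2
        · have : (⟨n, h⟩ : Fin (m + 1)) = Fin.castSucc ⟨n, h2⟩ := rfl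
          rw [this, hgsucc m, Fin.snoc_castSucc]
          exact ih n h2
        · have hnm : n = m := le_antisymm (Nat.lt_succ_iff.mp h) h2
          subst hnm
          have : (⟨n, h⟩ : Fin (n + 1)) = Fin.last n := rfl
          rw [this, hgsucc n, Fin.snoc_last]
  have hd : ∀ n m, n < m → u n ⊓ u m = 0 := by
    intro n m hnm
    have h1 : u m ⊓ (g m).val ⟨n, hnm⟩ = 0 := (hF m (g m)).2 ⟨n, hnm⟩
    rw [hrep m n hnm] at h1
    rw [inf_comm]
    exact h1
  refine hno ⟨u, fun n => ⟨(hu_atom n).1, (hu_atom n).2.1⟩, fun m n hmn => ?_⟩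
  rcases Nat.lt_or_ge m n with h | h
  · exact hd m n h
  · rw [inf_comm]
    exact hd n m (lt_of_le_of_ne h (Ne.symm hmn))

end Structure

section Decomp

variable {X : Type u} [AddCommGroup X] [Lattice X] [CovariantClass X X (· + ·) (· ≤ ·)]
  [Module ℝ X] [PosSMulMono ℝ X]

theorem lat_structure (hArch : ArchimedeanVL X) (hno : ¬ HasDisjSeq X) :
    ∃ (k : ℕ) (a : Fin k → X), (∀ i, IsLatAtom (a i)) ∧ (∀ i j, i ≠ j → a i ⊓ a j = 0) ∧
      ∀ x : X, 0 ≤ x → ∃ c : Fin k → ℝ, (∀ i, 0 ≤ c i) ∧ x = ∑ i, c i • a i := by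
  classical
  obtain ⟨k, a, hatoms, hdisj, hmax⟩ := exists_max_atoms hArch hno
  refine ⟨k, a, hatoms, hdisj, fun x hx => ?_⟩
  have key : ∀ s : Finset (Fin k), ∃ c : Fin k → ℝ, (∀ i, 0 ≤ c i) ∧
      0 ≤ x - ∑ i ∈ s, c i • a i ∧ ∀ i ∈ s, (x - ∑ i ∈ s, c i • a i) ⊓ a i = 0 := by
    intro s
    induction s using Finset.induction with
    | empty => exact ⟨fun _ => 0, fun _ => le_refl 0, by simpa using hx, by simp⟩
    | insert j s hj ih =>
        obtain ⟨c, hc0, hu0, hudisj⟩ := ih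
        obtain ⟨lam, hlam0, hlamle, hlamd⟩ :=
          atom_split hArch (hatoms j) hu0
        refine ⟨Function.update c j lam, ?_, ?_, ?_⟩
        · intro i
          rcases eq_or_ne i j with rfl | hij
          · rw [Function.update_self]; exact hlam0
          · rw [Function.update_of_ne hij]; exact hc0 i
        all_goals
          have hsum : ∑ i ∈ insert j s, Function.update c j lam i • a i
              = lam • a j + ∑ i ∈ s, c i • a i := by
            rw [Finset.sum_insert hj, Function.update_self]
            congr 1
            refine Finset.sum_congr rfl (fun i hi => ?_)
            have hne : i ≠ j := fun h => hj (by rwa [h] at hi)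
            rw [Function.update_of_ne hne]
        · rw [hsum]
          have : x - (lam • a j + ∑ i ∈ s, c i • a i)
              = (x - ∑ i ∈ s, c i • a i) - lam • a j := by abel
          rw [this]
          exact sub_nonneg.mpr hlamle
        · intro i hi
          rw [hsum]
          have heq : x - (lam • a j + ∑ i ∈ s, c i • a i)
              = (x - ∑ i ∈ s, c i • a i) - lam • a j := by abel
          rw [heq]
          rcases Finset.mem_insert.mp hi with rfl | hi'
          · exact hlamd
          · refine le_antisymm ?_ (le_inf (sub_nonneg.mpr hlamle) (hatoms i).1)
            calc ((x - ∑ i ∈ s, c i • a i) - lam • a j) ⊓ a i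
                ≤ (x - ∑ i ∈ s, c i • a i) ⊓ a i := by
                  refine inf_le_inf_right _ ?_
                  exact sub_le_self _ (smul_nonneg hlam0 (hatoms j).1)
              _ = 0 := hudisj i hi'
  obtain ⟨c, hc0, hu0, hudisj⟩ := key Finset.univ
  refine ⟨c, hc0, ?_⟩
  rw [← sub_eq_zero]
  by_contra hune
  obtain ⟨b, hb, hble⟩ := exists_atom_le hArch hno hu0 hune
  obtain ⟨i, hbi⟩ := hmax b hb
  have ht0 : (0:X) ≤ b ⊓ a i := le_inf hb.1 (hatoms i).1
  obtain ⟨s, hs0, hbs⟩ := hb.2.2 (b ⊓ a i) ht0 inf_le_left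
  obtain ⟨r, hr0, hbr⟩ := (hatoms i).2.2 (b ⊓ a i) ht0 inf_le_right
  have hs_pos : 0 < s := by
    rcases lt_or_eq_of_le hs0 with h | h
    · exact h
    · exfalso; apply hbi; rw [hbs, ← h, zero_smul]
  have hbeq : b = (s⁻¹ * r) • a i := by
    have h1 : s • b = r • a i := by rw [← hbs, ← hbr]
    rw [mul_smul, ← h1, inv_smul_smul₀ (ne_of_gt hs_pos)]
  have hub : (x - ∑ i ∈ Finset.univ, c i • a i) ⊓ b = 0 := by
    rw [hbeq]
    exact my_disj_smul (hudisj i (Finset.mem_univ i)) hu0 (hatoms i).1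
      (mul_nonneg (inv_nonneg.mpr hs0) hr0)
  have : b = 0 := by
    have h2 : b ⊓ (x - ∑ i ∈ Finset.univ, c i • a i) = b := inf_eq_left.mpr hble
    rw [inf_comm] at h2
    rw [← h2, hub]
  exact hb.2.1 this

end Decomp

section FinDim

variable {X : Type u} [AddCommGroup X] [Lattice X] [CovariantClass X X (· + ·) (· ≤ ·)]
  [Module ℝ X] [PosSMulMono ℝ X]

lemma my_abs_smul (t : ℝ) {x : X} (hx : 0 ≤ x) : |t • x| = |t| • x := by
  rcases le_total 0 t with h | h
  · rw [abs_of_nonneg (smul_nonneg h hx), abs_of_nonneg h]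
  · have h1 : t • x = -((-t) • x) := by rw [neg_smul, neg_neg]
    rw [h1, abs_neg, abs_of_nonneg (smul_nonneg (by linarith) hx), abs_of_nonpos h]

lemma my_abs_sum_le {ι : Type*} (s : Finset ι) (f : ι → X) :
    |∑ i ∈ s, f i| ≤ ∑ i ∈ s, |f i| := by
  classical
  induction s using Finset.induction with
  | empty => simp
  | insert j s hj ih =>
      rw [Finset.sum_insert hj, Finset.sum_insert hj]
      exact (abs_add_le _ _).trans (add_le_add_right ih _)

lemma disj_linearIndependent {ι : Type*} (u : ι → X) (h0 : ∀ i, 0 ≤ u i ∧ u i ≠ 0)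
    (hd : ∀ i j, i ≠ j → u i ⊓ u j = 0) : LinearIndependent ℝ u := by
  classical
  rw [linearIndependent_iff']
  intro s g hsum i hi
  by_contra hgne
  have h1 : g i • u i + ∑ j ∈ s.erase i, g j • u j = 0 := by
    rw [Finset.add_sum_erase s (fun j => g j • u j) hi]
    exact hsum
  have h2 : |g i| • u i = |g i • u i| := (my_abs_smul _ (h0 i).1).symm
  have h3 : |g i • u i| = |∑ j ∈ s.erase i, g j • u j| := by
    have : g i • u i = -∑ j ∈ s.erase i, g j • u j := by
      rw [eq_neg_iff_add_eq_zero]; exact h1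
    rw [this, abs_neg]
  have h4 : |∑ j ∈ s.erase i, g j • u j| ≤ ∑ j ∈ s.erase i, |g j| • u j := by
    refine (my_abs_sum_le _ _).trans ?_
    refine le_of_eq (Finset.sum_congr rfl (fun j hj => ?_))
    rw [my_abs_smul _ (h0 j).1]
  have hle : |g i| • u i ≤ ∑ j ∈ s.erase i, |g j| • u j := by
    rw [h2, h3]; exact h4
  have hw0 : (0:X) ≤ ∑ j ∈ s.erase i, |g j| • u j :=
    my_sum_nonneg (fun j hj => smul_nonneg (abs_nonneg _) (h0 j).1)
  have hwd : u i ⊓ (∑ j ∈ s.erase i, |g j| • u j) = 0 := by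
    refine my_sum_disj (h0 i).1 (fun j hj => smul_nonneg (abs_nonneg _) (h0 j).1)
      (fun j hj => ?_)
    exact my_disj_smul (hd i j (fun h => (Finset.ne_of_mem_erase hj) (h.symm)))
      (h0 i).1 (h0 j).1 (abs_nonneg _)
  have hdisj2 : (|g i| • u i) ⊓ (∑ j ∈ s.erase i, |g j| • u j) = 0 := by
    rw [inf_comm]
    exact my_disj_smul (by rw [inf_comm]; exact hwd) hw0 (h0 i).1 (abs_nonneg _)
  have hzero : |g i| • u i = 0 := by
    rw [← inf_eq_left.mpr hle]
    exact hdisj2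
  apply (h0 i).2
  have habs : |g i| ≠ 0 := abs_ne_zero.mpr hgne
  calc u i = |g i|⁻¹ • (|g i| • u i) := (inv_smul_smul₀ habs _).symm
    _ = 0 := by rw [hzero, smul_zero]

lemma findim_of_no_disjseq (hArch : ArchimedeanVL X) (hno : ¬ HasDisjSeq X) :
    FiniteDimensional ℝ X := by
  classical
  obtain ⟨k, a, hatoms, hdisj, hdecomp⟩ := lat_structure hArch hno
  have hspan : ∀ x : X, x ∈ Submodule.span ℝ (Set.range a) := by
    have hpos : ∀ x : X, 0 ≤ x → x ∈ Submodule.span ℝ (Set.range a) := by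
      intro x hx
      obtain ⟨c, hc0, hceq⟩ := hdecomp x hx
      rw [hceq]
      exact Submodule.sum_mem _ (fun i _ =>
        Submodule.smul_mem _ _ (Submodule.subset_span ⟨i, rfl⟩))
    intro x
    have hx : x = (x ⊔ 0) - ((-x) ⊔ 0) := by
      have := posPart_sub_negPart x
      rw [posPart_def, negPart_def] at this
      exact this.symm
    rw [hx]
    exact sub_mem (hpos _ le_sup_right) (hpos _ le_sup_right)
  refine ⟨⟨Finset.univ.image a, ?_⟩⟩
  rw [Finset.coe_image, Finset.coe_univ, Set.image_univ]
  exact eq_top_iff.mpr (fun x _ => hspan x)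

lemma no_disjseq_of_findim (hfd : FiniteDimensional ℝ X) : ¬ HasDisjSeq X := by
  rintro ⟨u, h0, hd⟩
  haveI := hfd
  have hli : LinearIndependent ℝ u := disj_linearIndependent u h0 hd
  have hfin : Finite ℕ := hli.finite
  exact not_finite ℕ

end FinDim

/-- An Archimedean vector lattice `X` is finite-dimensional iff every uo-null net in `X`
is eventually order bounded in `X`. -/
theorem finiteDimensional_iff_uoNull_eventuallyOrderBounded
    {X : Type u} [AddCommGroup X] [Lattice X]
    [CovariantClass X X (· + ·) (· ≤ ·)] [Module ℝ X] [PosSMulMono ℝ X]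
    (hArch : ArchimedeanVL X) :
    FiniteDimensional ℝ X ↔
      ∀ (ι : Type v) (_ : Preorder ι) (_ : Nonempty ι),
        IsDirected ι (· ≤ ·) →
        ∀ x : ι → X, UOConvergesTo x 0 → EventuallyOrderBounded x := by

  classical
  letI := AddCommGroup.toDistribLattice X
  constructor
  · -- finite dimensional ⇒ uo-null nets are eventually order bounded
    intro hfd ι ipre ine idir x huo
    obtain ⟨k, a, hatoms, hdisj, hdecomp⟩ :=
      lat_structure hArch (no_disjseq_of_findim hfd)
    set e : X := ∑ i, a i with he_def
    have he0 : 0 ≤ e := my_sum_nonneg (fun i _ => (hatoms i).1)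
    have haile : ∀ i, a i ≤ e := by
      intro i
      rw [he_def, ← Finset.add_sum_erase _ a (Finset.mem_univ i)]
      have h2 : (0:X) ≤ ∑ j ∈ Finset.univ.erase i, a j :=
        my_sum_nonneg (fun j _ => (hatoms j).1)
      calc a i = a i + 0 := (add_zero _).symm
        _ ≤ a i + ∑ j ∈ Finset.univ.erase i, a j := add_le_add_right h2 _
    obtain ⟨Γ, ipreΓ, ineΓ, idirΓ, z, hanti, hglb, hdom⟩ := huo e he0
    have hz0 : ∀ γ, 0 ≤ z γ := fun γ => hglb.1 ⟨γ, rfl⟩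
    have hgam : ∀ i : Fin k, ∃ γ : Γ, ¬ ((1/2 : ℝ) • a i ≤ z γ) := by
      intro i
      by_contra hcon
      push_neg at hcon
      have hlb : (1/2 : ℝ) • a i ∈ lowerBounds (Set.range z) := by
        rintro _ ⟨γ, rfl⟩; exact hcon γ
      have h1 : (1/2 : ℝ) • a i ≤ 0 := hglb.2 hlb
      have h2 : a i ≤ 0 := my_nonpos_of_smul (by norm_num) h1
      exact (hatoms i).2.1 (le_antisymm h2 (hatoms i).1)
    choose γf hγf using hgam
    obtain ⟨γs, hγs⟩ := Finset.exists_le (Finset.univ.image γf)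
    have hγs' : ∀ i, γf i ≤ γs := fun i =>
      hγs _ (Finset.mem_image_of_mem γf (Finset.mem_univ i))
    have h5 : ∀ i, ¬ ((1/2 : ℝ) • a i ≤ z γs) := by
      intro i hcon
      exact hγf i (hcon.trans (hanti (hγs' i)))
    obtain ⟨c, hc0, hceq⟩ := hdecomp (z γs) (hz0 γs)
    have hci : ∀ i, c i ≤ 1/2 := by
      intro i
      by_contra hcon
      push_neg at hcon
      apply h5 i
      calc (1/2 : ℝ) • a i ≤ c i • a i := my_smul_le_smul hcon.le (hatoms i).1
        _ ≤ ∑ j, c j • a j := by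
            rw [← Finset.add_sum_erase _ (fun j => c j • a j) (Finset.mem_univ i)]
            have h2 : (0:X) ≤ ∑ j ∈ Finset.univ.erase i, c j • a j :=
              my_sum_nonneg (fun j _ => smul_nonneg (hc0 j) (hatoms j).1)
            calc c i • a i = c i • a i + 0 := (add_zero _).symm
              _ ≤ _ := add_le_add_right h2 _
        _ = z γs := hceq.symm
    have hz_le : z γs ≤ (1/2 : ℝ) • e := by
      rw [hceq, he_def, Finset.smul_sum]
      exact my_sum_le_sum (fun i _ => my_smul_le_smul (hci i) (hatoms i).1)
    obtain ⟨α₀, hα₀⟩ := hdom γs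
    refine ⟨α₀, (1/2 : ℝ) • e, fun α hα => ?_⟩
    have h6 := hα₀ α hα
    rw [sub_zero, abs_of_nonneg (le_inf (abs_nonneg _) he0)] at h6
    rw [sub_zero] at h6
    have h7 : |x α| ⊓ e ≤ (1/2 : ℝ) • e := h6.trans hz_le
    -- now deduce |x α| ≤ (1/2) • e
    set w : X := |x α| with hw_def
    have hw0 : 0 ≤ w := abs_nonneg _
    obtain ⟨cw, hcw0, hcweq⟩ := hdecomp w hw0
    set μ : ℝ := ∑ i, cw i with hμ_def
    have hμ0 : 0 ≤ μ := Finset.sum_nonneg (fun i _ => hcw0 i)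
    have hwμ : w ≤ μ • e := by
      rw [hcweq, hμ_def, Finset.sum_smul]
      exact my_sum_le_sum (fun i _ =>
        smul_le_smul_of_nonneg_left (haile i) (hcw0 i))
    have hhalf0 : (0:X) ≤ (1/2 : ℝ) • e := smul_nonneg (by norm_num) he0
    set v : X := (w - (1/2 : ℝ) • e) ⊔ 0 with hv_def
    have hv0 : 0 ≤ v := le_sup_right
    have hq : (w - (1/2 : ℝ) • e) ⊓ ((1/2 : ℝ) • e) ≤ 0 := by
      have hsplit : e - (1/2 : ℝ) • e = (1/2 : ℝ) • e := by
        have h2 : (1/2 : ℝ) • e + (1/2 : ℝ) • e = e := by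
          rw [← add_smul]; norm_num
        rw [sub_eq_iff_eq_add]
        exact h2.symm
      calc (w - (1/2 : ℝ) • e) ⊓ ((1/2 : ℝ) • e)
          = (w - (1/2 : ℝ) • e) ⊓ (e - (1/2 : ℝ) • e) := by rw [hsplit]
        _ = (w ⊓ e) - (1/2 : ℝ) • e := (my_inf_sub w e _).symm
        _ ≤ 0 := sub_nonpos.mpr h7
    have hvd : v ⊓ ((1/2 : ℝ) • e) = 0 := by
      refine le_antisymm ?_ (le_inf hv0 hhalf0)
      rw [hv_def, inf_comm, inf_sup_left]
      refine sup_le ?_ ?_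
      · rw [inf_comm]; exact hq
      · exact inf_le_right
    set m : ℕ := 2 * ⌈μ⌉₊ with hm_def
    have hvdn : v ⊓ (m • ((1/2 : ℝ) • e)) = 0 := my_disj_nsmul hvd hv0 hhalf0 m
    have hme : μ • e ≤ m • ((1/2 : ℝ) • e) := by
      rw [← Nat.cast_smul_eq_nsmul ℝ m, smul_smul]
      refine my_smul_le_smul ?_ he0
      rw [hm_def]
      push_cast
      have := Nat.le_ceil μ
      linarith
    have hvle : v ≤ m • ((1/2 : ℝ) • e) := by
      refine le_trans ?_ (hwμ.trans hme)
      exact sup_le (sub_le_self _ hhalf0) hw0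
    have hveq : v = 0 := by
      rw [← inf_eq_left.mpr hvle]
      exact hvdn
    have h8 : w - (1/2 : ℝ) • e ≤ 0 := le_sup_left.trans_eq hveq
    exact sub_nonpos.mp h8
  · -- every uo-null net eventually order bounded ⇒ finite dimensional
    intro H
    by_contra hnfd
    have hds : HasDisjSeq X := by
      by_contra hno
      exact hnfd (findim_of_no_disjseq hArch hno)
    obtain ⟨en, hen, hend⟩ := hds
    set ι : Type v := ULift.{v} (ℕ ×ₗ ℕ) with hι_def
    have hne : Nonempty ι := ⟨ULift.up (toLex (0, 0))⟩
    have hdir : IsDirected ι (· ≤ ·) := inferInstance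
    set x : ι → X := fun α => (ofLex α.down).2 • en (ofLex α.down).1 with hx_def
    have hx0 : ∀ α, 0 ≤ x α := fun α => nsmul_nonneg (hen _).1 _
    have huo : UOConvergesTo x 0 := by
      intro y hy
      refine ⟨{p : ULift.{u} ℕ × X // 0 ≤ p.2 ∧
          ∀ n k : ℕ, p.1.down < n → (k • en n) ⊓ y ≤ p.2},
        Preorder.lift (fun p => (p.val.1.down, OrderDual.toDual p.val.2)),
        ⟨⟨(ULift.up 0, y), hy, fun n k _ => inf_le_right⟩⟩, ?_, fun p => p.val.2, ?_, ?_, ?_⟩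
      · -- directedness
        constructor
        intro p q
        refine ⟨⟨(ULift.up (max p.val.1.down q.val.1.down), p.val.2 ⊓ q.val.2),
          le_inf p.prop.1 q.prop.1, fun n k hn => le_inf
            (p.prop.2 n k (lt_of_le_of_lt (le_max_left _ _) hn))
            (q.prop.2 n k (lt_of_le_of_lt (le_max_right _ _) hn))⟩, ?_, ?_⟩
        · exact ⟨le_max_left _ _, inf_le_left⟩
        · exact ⟨le_max_right _ _, inf_le_right⟩
      · -- antitone
        intro p q hpq
        exact hpq.2
      · -- IsGLB
        constructor
        · rintro _ ⟨p, rfl⟩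
          exact p.prop.1
        · intro cc hcc
          -- main claim
          have claim : ∀ m : ℕ, ∀ (F : Finset ℕ) (κ : ℕ → ℕ),
              m • (cc ⊔ 0) + ∑ n ∈ F, ((κ n • en n) ⊓ y) ≤ y := by
            intro m
            induction m with
            | zero =>
                intro F κ
                rw [zero_nsmul, zero_add]
                refine my_sum_le_of_disj
                  (fun n _ => le_inf (nsmul_nonneg (hen n).1 _) hy)
                  (fun n _ => inf_le_right) (fun i _ j _ hij => ?_) hy
                refine le_antisymm ?_ (le_inf (le_inf (nsmul_nonneg (hen i).1 _) hy)
                  (le_inf (nsmul_nonneg (hen j).1 _) hy))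
                have hbase : en i ⊓ en j = 0 := hend i j hij
                have h1 : en i ⊓ (κ j • en j) = 0 :=
                  my_disj_nsmul hbase (hen i).1 (hen j).1 _
                have h2 : (κ i • en i) ⊓ (κ j • en j) = 0 := by
                  rw [inf_comm]
                  exact my_disj_nsmul (by rw [inf_comm]; exact h1)
                    (nsmul_nonneg (hen j).1 _) (hen i).1 _
                calc ((κ i • en i) ⊓ y) ⊓ ((κ j • en j) ⊓ y)
                    ≤ (κ i • en i) ⊓ (κ j • en j) := inf_le_inf inf_le_left inf_le_left
                  _ = 0 := h2
            | succ m ih =>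
                intro F κ
                set N : ℕ := F.sup id with hN_def
                set w : X := y - m • (cc ⊔ 0) - ∑ n ∈ F, ((κ n • en n) ⊓ y) with hw_def
                have hw0 : 0 ≤ w := by
                  rw [hw_def]
                  have := ih F κ
                  rw [sub_sub]
                  exact sub_nonneg.mpr this
                have hw_dom : ∀ n k : ℕ, N < n → (k • en n) ⊓ y ≤ w := by
                  intro n k hn
                  have hnF : n ∉ F := fun hmem =>
                    absurd (Finset.le_sup (f := id) hmem) (not_le.mpr hn)
                  have hins := ih (insert n F) (Function.update κ n k)
                  rw [Finset.sum_insert hnF, Function.update_self] at hins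
                  have hrest : ∑ j ∈ F, ((Function.update κ n k j • en j) ⊓ y)
                      = ∑ j ∈ F, ((κ j • en j) ⊓ y) := by
                    refine Finset.sum_congr rfl (fun j hj => ?_)
                    have hne2 : j ≠ n := fun h => hnF (by rwa [h] at hj)
                    rw [Function.update_of_ne hne2]
                  rw [hrest] at hins
                  rw [hw_def]
                  -- hins : m • (cc ⊔ 0) + ((k • en n) ⊓ y + ∑ ...) ≤ y
                  have h9 : (k • en n) ⊓ y + (m • (cc ⊔ 0) + ∑ j ∈ F, ((κ j • en j) ⊓ y)) ≤ y := by
                    calc (k • en n) ⊓ y + (m • (cc ⊔ 0) + ∑ j ∈ F, ((κ j • en j) ⊓ y))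
                        = m • (cc ⊔ 0) + ((k • en n) ⊓ y + ∑ j ∈ F, ((κ j • en j) ⊓ y)) := by abel
                      _ ≤ y := hins
                  rw [sub_sub]
                  exact le_sub_iff_add_le.mpr h9
                have hmem : cc ≤ w := hcc ⟨⟨(ULift.up N, w), hw0, hw_dom⟩, rfl⟩
                have hccw : cc ⊔ 0 ≤ w := sup_le hmem hw0
                rw [succ_nsmul]
                calc m • (cc ⊔ 0) + (cc ⊔ 0) + ∑ n ∈ F, ((κ n • en n) ⊓ y)
                    ≤ m • (cc ⊔ 0) + w + ∑ n ∈ F, ((κ n • en n) ⊓ y) := by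
                      exact add_le_add_left (add_le_add_right hccw _) _
                  _ = y := by rw [hw_def]; abel
          have hfin : ∀ m : ℕ, m • (cc ⊔ 0) ≤ y := by
            intro m
            have := claim m ∅ (fun _ => 0)
            simpa using this
          have h10 : cc ⊔ 0 ≤ 0 := hArch _ y hfin
          exact le_sup_left.trans h10
      · -- domination
        intro p
        refine ⟨ULift.up (toLex (p.val.1.down + 1, 0)), fun α hα => ?_⟩
        have hlex : toLex (p.val.1.down + 1, 0) ≤ α.down := hα
        simp only [sub_zero]
        rw [abs_of_nonneg (hx0 α), abs_of_nonneg (le_inf (hx0 α) hy)]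
        obtain hlt | ⟨heq, -⟩ := Prod.Lex.le_iff.mp
          (by exact hlex : toLex (p.val.1.down + 1, (0:ℕ)) ≤ toLex (ofLex α.down))
        · exact p.prop.2 _ _ (Nat.lt_of_succ_lt hlt)
        · exact p.prop.2 _ _ (heq ▸ Nat.lt_succ_self _)
    obtain ⟨α₀, b, hb⟩ := H ι inferInstance hne hdir x huo
    set n₀ : ℕ := (ofLex α₀.down).1 with hn₀_def
    have hall : ∀ k : ℕ, k • en (n₀ + 1) ≤ b := by
      intro k
      have hle : α₀ ≤ ULift.up (toLex (n₀ + 1, k)) := by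
        show α₀.down ≤ toLex (n₀ + 1, k)
        have : α₀.down = toLex (ofLex α₀.down) := rfl
        rw [this]
        exact Prod.Lex.le_iff.mpr (Or.inl (Nat.lt_succ_self _))
      have h12 := hb _ hle
      have hxeq : x (ULift.up (toLex (n₀ + 1, k))) = k • en (n₀ + 1) := rfl
      rwa [hxeq, abs_of_nonneg (nsmul_nonneg (hen _).1 _)] at h12
    have h11 : en (n₀ + 1) ≤ 0 := hArch _ b hall
    exact (hen (n₀ + 1)).2 (le_antisymm h11 (hen (n₀ + 1)).1)
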